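/- Let s ∈ {+1,−1} and let ω and κ be two T-incidence phase functions on the same simple graph Γ that are orientations of the same T^s-gain graph, i.e. ω(i,e)·s·conj(ω(j,e)) = κ(i,e)·s·conj(κ(j,e)) for every edge e with endpoints i and j. Then the line-graph adjacency matrices A_Λ(ω) and A_Λ(κ) have the same characteristic polynomial, and hence the same spectrum. -/

import Mathlib

open Finset Matrix

/-- The adjacency matrix of the line graph of an oriented `𝕋^σ`-gain graph:
the `(e,f)` entry is `σ · conj (ω v e) · ω v f` when `e ≠ f` share the (unique)
common endpoint `v`, and `0` otherwise. -/
noncomputable def lineAdjMatrix {V : Type*} [Fintype V] [DecidableEq V]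
    (Γ : SimpleGraph V) [DecidableRel Γ.Adj] (σ : ℂ) (ω : V → Sym2 V → ℂ) :
    Matrix Γ.edgeSet Γ.edgeSet ℂ :=
  fun e f =>
    if e = f then 0
    else ∑ v : V, if v ∈ (e : Sym2 V) ∧ v ∈ (f : Sym2 V) then
      σ * (starRingEnd ℂ) (ω v (e : Sym2 V)) * ω v (f : Sym2 V) else 0

/-- Characteristic polynomial is invariant under conjugation by an invertible matrix. -/
lemma charpoly_conj_aux {n : Type*} [Fintype n] [DecidableEq n]
    (P M : Matrix n n ℂ) (hP : IsUnit P) :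
    (P * M * P⁻¹).charpoly = M.charpoly := by
  classical
  have hdP : IsUnit P.det := (Matrix.isUnit_iff_isUnit_det P).mp hP
  set P' : Matrix n n (Polynomial ℂ) := P.map (Polynomial.C : ℂ → Polynomial ℂ) with hP'def
  have hmap : ∀ A B : Matrix n n ℂ,
      (A * B).map (Polynomial.C : ℂ → Polynomial ℂ)
        = A.map Polynomial.C * B.map Polynomial.C := by
    intro A B
    exact Matrix.map_mul (f := (Polynomial.C : ℂ →+* Polynomial ℂ))
  have hone : (1 : Matrix n n ℂ).map (Polynomial.C : ℂ → Polynomial ℂ) = 1 :=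
    Matrix.map_one _ (map_zero _) (map_one _)
  have hPinv : P' * (P⁻¹).map (Polynomial.C : ℂ → Polynomial ℂ) = 1 := by
    rw [hP'def, ← hmap, Matrix.mul_nonsing_inv _ hdP, hone]
  have hP'unit : IsUnit P' := by
    apply (Matrix.isUnit_iff_isUnit_det P').mpr
    refine IsUnit.of_mul_eq_one (((P⁻¹).map Polynomial.C).det) ?_
    rw [← Matrix.det_mul, hPinv, Matrix.det_one]
  have hP'inv : P'⁻¹ = (P⁻¹).map (Polynomial.C : ℂ → Polynomial ℂ) :=
    Matrix.inv_eq_right_inv hPinv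
  have hcomm : ∀ A : Matrix n n (Polynomial ℂ),
      Matrix.scalar n (Polynomial.X :  Polynomial ℂ) * A
        = A * Matrix.scalar n Polynomial.X := fun A =>
    (Matrix.scalar_commute _ (fun r => Commute.all _ r) A)
  have hchar : Matrix.charmatrix (P * M * P⁻¹) = P' * Matrix.charmatrix M * P'⁻¹ := by
    rw [hP'inv]
    simp only [Matrix.charmatrix, RingHom.mapMatrix_apply, hmap]
    rw [mul_sub, sub_mul]
    congr 1
    rw [← hcomm P', mul_assoc, hPinv, mul_one]
  show (Matrix.charmatrix (P * M * P⁻¹)).det = (Matrix.charmatrix M).det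
  rw [hchar, Matrix.det_conj hP'unit]

/-- If `ω` and `κ` are two `𝕋`-incidence phase functions on the
same simple graph which are orientations of the same `𝕋^σ`-gain graph (with
`σ ∈ {+1,−1}`), then the line-graph adjacency matrices `A_Λ(ω)` and `A_Λ(κ)`
have the same characteristic polynomial, and hence the same spectrum. -/
theorem line_graph_spectrum_independent_of_orientation
    {V : Type*} [Fintype V] [DecidableEq V]
    (Γ : SimpleGraph V) [DecidableRel Γ.Adj]
    (σ : ℂ) (hσ : σ = 1 ∨ σ = -1) (ω κ : V → Sym2 V → ℂ)
    (hω : ∀ (v : V) (e : Sym2 V), e ∈ Γ.edgeSet → v ∈ e → ‖ω v e‖ = 1)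
    (hκ : ∀ (v : V) (e : Sym2 V), e ∈ Γ.edgeSet → v ∈ e → ‖κ v e‖ = 1)
    (hsame : ∀ i j : V, Γ.Adj i j →
      ω i s(i, j) * σ * (starRingEnd ℂ) (ω j s(i, j))
        = κ i s(i, j) * σ * (starRingEnd ℂ) (κ j s(i, j))) :
    (lineAdjMatrix Γ σ ω).charpoly = (lineAdjMatrix Γ σ κ).charpoly ∧
    spectrum ℂ (lineAdjMatrix Γ σ ω) = spectrum ℂ (lineAdjMatrix Γ σ κ) := by
  classical
  have hσ0 : σ ≠ 0 := by rcases hσ with h | h <;> simp [h]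
  have habs : ∀ z : ℂ, ‖z‖ = 1 → z * (starRingEnd ℂ) z = 1 := by
    intro z hz
    rw [Complex.mul_conj]
    norm_cast
    rw [Complex.normSq_eq_norm_sq, hz, one_pow]
  -- key step: the "switching ratio" is the same at both endpoints of an edge
  have step : ∀ i j : V, Γ.Adj i j →
      κ i s(i,j) * (starRingEnd ℂ) (ω i s(i,j)) = κ j s(i,j) * (starRingEnd ℂ) (ω j s(i,j)) := by
    intro i j h
    have he : s(i,j) ∈ Γ.edgeSet := Γ.mem_edgeSet.mpr h
    have hi : i ∈ s(i,j) := Sym2.mem_mk_left i j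
    have hj : j ∈ s(i,j) := Sym2.mem_mk_right i j
    have h1 : ω i s(i,j) * (starRingEnd ℂ) (ω i s(i,j)) = 1 := habs _ (hω i _ he hi)
    have h4 : κ j s(i,j) * (starRingEnd ℂ) (κ j s(i,j)) = 1 := habs _ (hκ j _ he hj)
    have E : ω i s(i,j) * (starRingEnd ℂ) (ω j s(i,j))
        = κ i s(i,j) * (starRingEnd ℂ) (κ j s(i,j)) := by
      have h2 := hsame i j h
      apply mul_left_cancel₀ hσ0
      linear_combination h2
    linear_combination (-((starRingEnd ℂ) (ω i s(i,j)) * κ j s(i,j))) * E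
      + (κ j s(i,j) * (starRingEnd ℂ) (ω j s(i,j))) * h1
      - (κ i s(i,j) * (starRingEnd ℂ) (ω i s(i,j))) * h4
  have hswitch : ∀ e : Sym2 V, e ∈ Γ.edgeSet → ∀ v ∈ e, ∀ w ∈ e,
      κ v e * (starRingEnd ℂ) (ω v e) = κ w e * (starRingEnd ℂ) (ω w e) := by
    intro e
    induction e using Sym2.ind with
    | _ i j =>
      intro he v hv w hw
      have hadj : Γ.Adj i j := Γ.mem_edgeSet.mp he
      rw [Sym2.mem_iff] at hv hw
      rcases hv with rfl | rfl <;> rcases hw with rfl | rfl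
      · rfl
      · exact step v w hadj
      · have := step w v hadj
        rw [Sym2.eq_swap] at this ⊢
        exact this.symm
      · rfl
  -- the switching function
  set g : Γ.edgeSet → ℂ :=
    fun e => κ (e : Sym2 V).out.1 e * (starRingEnd ℂ) (ω (e : Sym2 V).out.1 e) with hgdef
  have hgabs : ∀ e : Γ.edgeSet, ‖g e‖ = 1 := by
    intro e
    have hmem := Sym2.out_fst_mem (e : Sym2 V)
    rw [hgdef]
    simp only [norm_mul, Complex.norm_conj]
    rw [hκ _ _ e.2 hmem, hω _ _ e.2 hmem, one_mul]
  have hgu : ∀ e : Γ.edgeSet, (starRingEnd ℂ) (g e) * g e = 1 := by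
    intro e; rw [mul_comm]; exact habs _ (hgabs e)
  have hκω : ∀ (e : Γ.edgeSet) (v : V), v ∈ (e : Sym2 V) →
      κ v e = g e * ω v e := by
    intro e v hv
    have h1 := hswitch e e.2 v hv (e : Sym2 V).out.1 (Sym2.out_fst_mem _)
    have h2 : ω v (e : Sym2 V) * (starRingEnd ℂ) (ω v (e : Sym2 V)) = 1 :=
      habs _ (hω v _ e.2 hv)
    rw [hgdef]
    linear_combination (ω v (e : Sym2 V)) * h1 - (κ v (e : Sym2 V)) * h2
  -- the conjugating diagonal matrix
  set P : Matrix Γ.edgeSet Γ.edgeSet ℂ :=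
    Matrix.diagonal (fun e => (starRingEnd ℂ) (g e)) with hPdef
  have hPQ : P * Matrix.diagonal g = 1 := by
    rw [hPdef, Matrix.diagonal_mul_diagonal]
    have : (fun e => (starRingEnd ℂ) (g e) * g e) = fun _ => (1 : ℂ) := funext hgu
    rw [this, Matrix.diagonal_one]
  have hU : IsUnit P := by
    apply (Matrix.isUnit_iff_isUnit_det P).mpr
    refine IsUnit.of_mul_eq_one (Matrix.diagonal g).det ?_
    rw [← Matrix.det_mul, hPQ, Matrix.det_one]
  have hPinv : P⁻¹ = Matrix.diagonal g := Matrix.inv_eq_right_inv hPQ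
  have hconj : lineAdjMatrix Γ σ κ = P * lineAdjMatrix Γ σ ω * P⁻¹ := by
    rw [hPinv, hPdef]
    ext e f
    rw [Matrix.mul_apply]
    simp only [Matrix.diagonal_mul, Matrix.mul_diagonal]
    rw [Finset.sum_eq_single f (by intro b _ hb; simp [Matrix.diagonal_apply_ne _ hb])
      (by intro h; exact absurd (Finset.mem_univ f) h)]
    rw [Matrix.diagonal_apply_eq]
    simp only [lineAdjMatrix]
    by_cases hef : e = f
    · subst hef
      simp
    · simp only [if_neg hef]
      rw [Finset.mul_sum, Finset.sum_mul]
      refine Finset.sum_congr rfl ?_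
      intro v _
      by_cases hvf : v ∈ (e : Sym2 V) ∧ v ∈ (f : Sym2 V)
      · simp only [if_pos hvf]
        rw [hκω e v hvf.1, hκω f v hvf.2, RingHom.map_mul]
        ring
      · simp [hvf]
  constructor
  · rw [hconj, charpoly_conj_aux P _ hU]
  · rw [hconj]
    have hu1 : (hU.unit : Matrix Γ.edgeSet Γ.edgeSet ℂ) = P := hU.unit_spec
    have hu2 : ((hU.unit⁻¹ : (Matrix Γ.edgeSet Γ.edgeSet ℂ)ˣ) : Matrix Γ.edgeSet Γ.edgeSet ℂ)
        = P⁻¹ := by rw [Matrix.coe_units_inv, hu1]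
    have h3 := spectrum.units_conjugate (R := ℂ) (a := lineAdjMatrix Γ σ ω) (u := hU.unit)
    rw [hu1, hu2] at h3
    exact h3.symm
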